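/- The Jaccard similarity on finite sets, K(A, B) = |A ∩ B|/|A ∪ B| (with K(∅,∅) := 1), is a symmetric positive semidefinite kernel: for finite sets A_1,…,A_n and reals α_1,…,α_n, ∑_{i,j} α_i α_j K(A_i, A_j) ≥ 0. -/

import Mathlib

open Finset

instance withTopFinFintype (m : ℕ) : Fintype (WithTop (Fin m)) :=
  inferInstanceAs (Fintype (Option (Fin m)))

section Key
variable {α : Type*} [Fintype α] [DecidableEq α]

noncomputable def e0 (α : Type*) [Fintype α] [DecidableEq α] : α ≃ Fin (Fintype.card α) :=
  Fintype.equivFin α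

noncomputable def mfun (σ : Equiv.Perm α) (s : Finset α) : WithTop (Fin (Fintype.card α)) :=
  (s.image (fun x => e0 α (σ x))).min

/-- image of u under swap a b with a,b ∈ u is u -/
lemma swap_image (u : Finset α) {a b : α} (ha : a ∈ u) (hb : b ∈ u) :
    u.image (Equiv.swap a b) = u := by
  ext x
  simp only [mem_image]
  constructor
  · rintro ⟨y, hy, rfl⟩
    rcases eq_or_ne y a with rfl | hya
    · simpa [Equiv.swap_apply_left] using hb
    rcases eq_or_ne y b with rfl | hyb
    · simpa [Equiv.swap_apply_right] using ha
    · rwa [Equiv.swap_apply_of_ne_of_ne hya hyb]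
  · intro hx
    refine ⟨Equiv.swap a b x, ?_, Equiv.swap_apply_self a b x⟩
    rcases eq_or_ne x a with rfl | hxa
    · simpa [Equiv.swap_apply_left] using hb
    rcases eq_or_ne x b with rfl | hxb
    · simpa [Equiv.swap_apply_right] using ha
    · rwa [Equiv.swap_apply_of_ne_of_ne hxa hxb]

/-- the fiber of permutations whose minimizer on u is a -/
noncomputable def C (u : Finset α) (a : α) : Finset (Equiv.Perm α) :=
  univ.filter (fun σ => mfun σ u = (e0 α (σ a) : WithTop (Fin (Fintype.card α))))

lemma C_card_eq (u : Finset α) {a b : α} (ha : a ∈ u) (hb : b ∈ u) :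
    (C u a).card = (C u b).card := by
  apply Finset.card_bij' (fun σ _ => σ * Equiv.swap a b) (fun σ _ => σ * Equiv.swap a b)
  · intro σ hσ
    simp only [C, mem_filter, mem_univ, true_and] at hσ ⊢
    simp only [mfun] at hσ ⊢
    have himg : u.image (fun x => e0 α ((σ * Equiv.swap a b) x))
        = u.image (fun x => e0 α (σ x)) := by
      have h2 : u.image (fun x => e0 α ((σ * Equiv.swap a b) x))
          = (u.image (Equiv.swap a b)).image (fun x => e0 α (σ x)) := by
        rw [image_image]; rfl
      rw [h2, swap_image u ha hb]
    rw [himg, hσ]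
    congr 2
    simp [Equiv.Perm.mul_apply]
  · intro σ hσ
    simp only [C, mem_filter, mem_univ, true_and] at hσ ⊢
    simp only [mfun] at hσ ⊢
    have himg : u.image (fun x => e0 α ((σ * Equiv.swap a b) x))
        = u.image (fun x => e0 α (σ x)) := by
      have h2 : u.image (fun x => e0 α ((σ * Equiv.swap a b) x))
          = (u.image (Equiv.swap a b)).image (fun x => e0 α (σ x)) := by
        rw [image_image]; rfl
      rw [h2, swap_image u ha hb]
    rw [himg, hσ]
    congr 2
    simp [Equiv.Perm.mul_apply]
  · intro σ _; ext x; simp [Equiv.Perm.mul_apply]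
  · intro σ _; ext x; simp [Equiv.Perm.mul_apply]

lemma C_disjoint (u : Finset α) {a b : α} (hab : a ≠ b) : Disjoint (C u a) (C u b) := by
  refine Finset.disjoint_left.mpr ?_
  intro σ hσa hσb
  simp only [C, mem_filter] at hσa hσb
  apply hab
  have h := hσa.2.symm.trans hσb.2
  have h2 : e0 α (σ a) = e0 α (σ b) := by exact_mod_cast h
  exact σ.injective ((e0 α).injective h2)

lemma C_biUnion_eq_univ (u : Finset α) (hu : u.Nonempty) :
    u.biUnion (C u) = univ := by
  apply Finset.eq_univ_of_forall
  intro σ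
  have hne : (u.image (fun x => e0 α (σ x))).Nonempty := hu.image _
  obtain ⟨w, hw⟩ := Finset.min_of_nonempty hne
  have hwmem : w ∈ u.image (fun x => e0 α (σ x)) := Finset.mem_of_min hw
  obtain ⟨a, ha, hae⟩ := Finset.mem_image.mp hwmem
  refine Finset.mem_biUnion.mpr ⟨a, ha, ?_⟩
  simp only [C, mem_filter, mem_univ, true_and]
  simp only [mfun]
  rw [hw, hae]

lemma C_card (u : Finset α) (hu : u.Nonempty) {a : α} (ha : a ∈ u) :
    (C u a).card * u.card = Fintype.card (Equiv.Perm α) := by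
  calc (C u a).card * u.card = ∑ _b ∈ u, (C u a).card := by
        rw [Finset.sum_const, smul_eq_mul, mul_comm]
    _ = ∑ b ∈ u, (C u b).card := Finset.sum_congr rfl fun b hb => C_card_eq u ha hb
    _ = (u.biUnion (C u)).card := (Finset.card_biUnion fun x _ y _ h => C_disjoint u h).symm
    _ = _ := by rw [C_biUnion_eq_univ u hu, card_univ]

lemma mfun_union (σ : Equiv.Perm α) (s t : Finset α) :
    mfun σ (s ∪ t) = min (mfun σ s) (mfun σ t) := by
  simp only [mfun, Finset.image_union]
  show _ = _ ⊓ _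
  apply le_antisymm
  · exact le_inf (Finset.min_mono subset_union_left) (Finset.min_mono subset_union_right)
  · apply Finset.le_min
    intro a ha
    rcases Finset.mem_union.mp ha with h | h
    · exact inf_le_left.trans (Finset.min_le h)
    · exact inf_le_right.trans (Finset.min_le h)

lemma mfun_eq_iff (σ : Equiv.Perm α) (s t : Finset α) (h : (s ∪ t).Nonempty) :
    mfun σ s = mfun σ t ↔ ∃ a ∈ s ∩ t,
      mfun σ (s ∪ t) = (e0 α (σ a) : WithTop (Fin (Fintype.card α))) := by
  constructor
  · intro heq
    have hmin : mfun σ (s ∪ t) = mfun σ s := by rw [mfun_union, heq, min_self]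
    have hne : (mfun σ (s ∪ t)) ≠ ⊤ := by
      simp only [mfun, ne_eq, Finset.min_eq_top]
      exact fun hc => absurd (Finset.image_eq_empty.mp hc) h.ne_empty
    obtain ⟨w, hw⟩ := Finset.min_of_nonempty (h.image (fun x => e0 α (σ x)))
    have hws : w ∈ s.image (fun x => e0 α (σ x)) := by
      have : (s.image (fun x => e0 α (σ x))).min = (w : WithTop _) := by
        rw [← mfun, ← hmin, mfun]; exact hw
      exact Finset.mem_of_min this
    have hwt : w ∈ t.image (fun x => e0 α (σ x)) := by
      have : (t.image (fun x => e0 α (σ x))).min = (w : WithTop _) := by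
        rw [← mfun, ← heq, ← hmin, mfun]; exact hw
      exact Finset.mem_of_min this
    obtain ⟨a, has, hae⟩ := Finset.mem_image.mp hws
    obtain ⟨b, hbt, hbe⟩ := Finset.mem_image.mp hwt
    have hab : a = b := σ.injective ((e0 α).injective (hae.trans hbe.symm))
    refine ⟨a, Finset.mem_inter.mpr ⟨has, hab ▸ hbt⟩, ?_⟩
    rw [mfun, hw, hae]
  · rintro ⟨a, hast, hmin⟩
    have has := (Finset.mem_inter.mp hast).1
    have hat := (Finset.mem_inter.mp hast).2
    have key : ∀ (v : Finset α), a ∈ v → v ⊆ s ∪ t →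
        mfun σ v = (e0 α (σ a) : WithTop (Fin (Fintype.card α))) := by
      intro v hav hsub
      apply le_antisymm
      · exact Finset.min_le (Finset.mem_image_of_mem _ hav)
      · rw [← hmin]
        exact Finset.min_mono (Finset.image_subset_image hsub)
    rw [key s has subset_union_left, key t hat subset_union_right]

lemma count_pair (s t : Finset α) :
    (univ.filter (fun σ : Equiv.Perm α => mfun σ s = mfun σ t)).card * (s ∪ t).card
      = (s ∩ t).card * Fintype.card (Equiv.Perm α) := by
  rcases (s ∪ t).eq_empty_or_nonempty with he | hne
  · have hs : s = ∅ := (Finset.union_eq_empty.mp he).1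
    have ht : t = ∅ := (Finset.union_eq_empty.mp he).2
    simp [hs, ht]
  · have hset : univ.filter (fun σ : Equiv.Perm α => mfun σ s = mfun σ t)
        = (s ∩ t).biUnion (C (s ∪ t)) := by
      ext σ
      simp only [mem_filter, mem_univ, true_and, mem_biUnion, C, mfun_eq_iff σ s t hne]
    rw [hset, Finset.card_biUnion fun x _ y _ h => C_disjoint _ h, Finset.sum_mul]
    rw [Finset.sum_congr rfl fun a ha =>
      C_card (s ∪ t) hne (Finset.mem_of_subset (Finset.inter_subset_union) ha)]
    rw [Finset.sum_const, smul_eq_mul]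

lemma kernel_as_count (s t : Finset α) :
    (if s ∪ t = ∅ then (1 : ℝ) else ((s ∩ t).card : ℝ) / ((s ∪ t).card : ℝ))
      = ((univ.filter (fun σ : Equiv.Perm α => mfun σ s = mfun σ t)).card : ℝ)
        / (Fintype.card (Equiv.Perm α) : ℝ) := by
  have hP : (0 : ℝ) < (Fintype.card (Equiv.Perm α) : ℝ) := by
    exact_mod_cast Fintype.card_pos
  rcases (s ∪ t).eq_empty_or_nonempty with he | hne
  · have hs : s = ∅ := (Finset.union_eq_empty.mp he).1
    have ht : t = ∅ := (Finset.union_eq_empty.mp he).2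
    have : univ.filter (fun σ : Equiv.Perm α => mfun σ s = mfun σ t) = univ := by
      apply Finset.filter_true_of_mem; intro σ _; rw [hs, ht]
    rw [he, if_pos rfl, this, card_univ]
    field_simp
  · rw [if_neg hne.ne_empty]
    have hcount := count_pair (α := α) s t
    have hu : (0 : ℝ) < ((s ∪ t).card : ℝ) := by
      exact_mod_cast Finset.card_pos.mpr hne
    rw [div_eq_div_iff hu.ne' hP.ne']
    have := congrArg (fun n : ℕ => (n : ℝ)) hcount
    push_cast at this
    linarith [this]

/-- pointwise PSD of equality kernel -/
lemma eq_kernel_psd {ι β : Type*} [Fintype ι] [Fintype β] [DecidableEq β]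
    (f : ι → β) (c : ι → ℝ) :
    0 ≤ ∑ i, ∑ j, c i * c j * (if f i = f j then (1 : ℝ) else 0) := by
  have h : ∀ i j, (if f i = f j then (1 : ℝ) else 0)
      = ∑ v, (if f i = v then (1 : ℝ) else 0) * (if f j = v then 1 else 0) := by
    intro i j
    rw [Finset.sum_eq_single (f i)]
    · by_cases hij : f i = f j <;> simp [hij, eq_comm]
    · intro v _ hv; simp [Ne.symm hv]
    · intro hv; simp at hv
  have key : ∑ i, ∑ j, c i * c j * (if f i = f j then (1 : ℝ) else 0)
      = ∑ v, (∑ i, c i * (if f i = v then (1 : ℝ) else 0)) ^ 2 := by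
    calc ∑ i, ∑ j, c i * c j * (if f i = f j then (1 : ℝ) else 0)
        = ∑ i, ∑ j, ∑ v, (c i * (if f i = v then (1 : ℝ) else 0))
            * (c j * (if f j = v then 1 else 0)) := by
          refine Finset.sum_congr rfl fun i _ => Finset.sum_congr rfl fun j _ => ?_
          rw [h, Finset.mul_sum]
          exact Finset.sum_congr rfl fun v _ => by ring
      _ = ∑ i, ∑ v, ∑ j, (c i * (if f i = v then (1 : ℝ) else 0))
            * (c j * (if f j = v then 1 else 0)) :=
          Finset.sum_congr rfl fun i _ => Finset.sum_comm
      _ = ∑ v, ∑ i, ∑ j, (c i * (if f i = v then (1 : ℝ) else 0))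
            * (c j * (if f j = v then 1 else 0)) := Finset.sum_comm
      _ = ∑ v, (∑ i, c i * (if f i = v then (1 : ℝ) else 0)) ^ 2 := by
          refine Finset.sum_congr rfl fun v _ => ?_
          rw [sq, Finset.sum_mul_sum]
  rw [key]
  exact Finset.sum_nonneg fun v _ => sq_nonneg _

lemma jaccard_psd_fintype (n : ℕ) (B : Fin n → Finset α) (c : Fin n → ℝ) :
    0 ≤ ∑ i, ∑ j, c i * c j *
      (if B i ∪ B j = ∅ then (1 : ℝ)
       else ((B i ∩ B j).card : ℝ) / ((B i ∪ B j).card : ℝ)) := by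
  have hP : (0 : ℝ) < (Fintype.card (Equiv.Perm α) : ℝ) := by
    exact_mod_cast Fintype.card_pos
  have key : ∑ i, ∑ j, c i * c j *
      (if B i ∪ B j = ∅ then (1 : ℝ)
       else ((B i ∩ B j).card : ℝ) / ((B i ∪ B j).card : ℝ))
      = ∑ σ : Equiv.Perm α, (1 / (Fintype.card (Equiv.Perm α) : ℝ)) *
          ∑ i, ∑ j, c i * c j *
            (if mfun σ (B i) = mfun σ (B j) then (1 : ℝ) else 0) := by
    calc ∑ i, ∑ j, c i * c j *
        (if B i ∪ B j = ∅ then (1 : ℝ)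
         else ((B i ∩ B j).card : ℝ) / ((B i ∪ B j).card : ℝ))
        = ∑ i, ∑ j, ∑ σ : Equiv.Perm α, (1 / (Fintype.card (Equiv.Perm α) : ℝ)) *
            (c i * c j * (if mfun σ (B i) = mfun σ (B j) then (1 : ℝ) else 0)) := by
          refine Finset.sum_congr rfl fun i _ => Finset.sum_congr rfl fun j _ => ?_
          rw [kernel_as_count (B i) (B j), Finset.card_filter]
          push_cast
          rw [Finset.sum_div, Finset.mul_sum]
          exact Finset.sum_congr rfl fun σ _ => by ring
      _ = ∑ i, ∑ σ : Equiv.Perm α, ∑ j, (1 / (Fintype.card (Equiv.Perm α) : ℝ)) *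
            (c i * c j * (if mfun σ (B i) = mfun σ (B j) then (1 : ℝ) else 0)) :=
          Finset.sum_congr rfl fun i _ => Finset.sum_comm
      _ = ∑ σ : Equiv.Perm α, ∑ i, ∑ j, (1 / (Fintype.card (Equiv.Perm α) : ℝ)) *
            (c i * c j * (if mfun σ (B i) = mfun σ (B j) then (1 : ℝ) else 0)) :=
          Finset.sum_comm
      _ = _ := by
          refine Finset.sum_congr rfl fun σ _ => ?_
          rw [Finset.mul_sum]
          exact Finset.sum_congr rfl fun i _ => by rw [Finset.mul_sum]
  rw [key]
  refine Finset.sum_nonneg fun σ _ => mul_nonneg (by positivity) (eq_kernel_psd _ _)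

end Key

theorem jaccard_psd {γ : Type*} [DecidableEq γ] :
    (∀ A B : Finset γ,
      (if A ∪ B = ∅ then (1 : ℝ) else ((A ∩ B).card : ℝ) / ((A ∪ B).card : ℝ)) =
      (if B ∪ A = ∅ then (1 : ℝ) else ((B ∩ A).card : ℝ) / ((B ∪ A).card : ℝ))) ∧
    (∀ (n : ℕ) (A : Fin n → Finset γ) (α : Fin n → ℝ),
      0 ≤ ∑ i, ∑ j, α i * α j *
        (if A i ∪ A j = ∅ then (1 : ℝ)
         else ((A i ∩ A j).card : ℝ) / ((A i ∪ A j).card : ℝ))) := by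
  constructor
  · intro A B
    rw [Finset.union_comm, Finset.inter_comm]
  · intro n A c
    set U : Finset γ := Finset.univ.biUnion A with hU
    have hsub : ∀ i, A i ⊆ U := fun i => Finset.subset_biUnion_of_mem A (Finset.mem_univ i)
    set B : Fin n → Finset {x : γ // x ∈ U} := fun i => (A i).subtype (· ∈ U) with hB
    have hinter : ∀ i j, ((A i ∩ A j).card : ℝ) = ((B i ∩ B j).card : ℝ) := by
      intro i j
      congr 1
      rw [show B i ∩ B j = (A i ∩ A j).subtype (· ∈ U) by
        ext a; simp [hB, Finset.mem_subtype]]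
      rw [Finset.card_subtype, Finset.filter_true_of_mem
        fun x hx => hsub i (Finset.mem_inter.mp hx).1]
    have hunion : ∀ i j, (A i ∪ A j).card = (B i ∪ B j).card := by
      intro i j
      rw [show B i ∪ B j = (A i ∪ A j).subtype (· ∈ U) by
        ext a; simp [hB, Finset.mem_subtype]]
      rw [Finset.card_subtype, Finset.filter_true_of_mem
        fun x hx => (Finset.mem_union.mp hx).elim (fun h => hsub i h) (fun h => hsub j h)]
    have hempty : ∀ i j, (A i ∪ A j = ∅) ↔ (B i ∪ B j = ∅) := by
      intro i j
      rw [← Finset.card_eq_zero, ← Finset.card_eq_zero, hunion]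
    have : ∀ i j, (if A i ∪ A j = ∅ then (1 : ℝ)
         else ((A i ∩ A j).card : ℝ) / ((A i ∪ A j).card : ℝ))
       = (if B i ∪ B j = ∅ then (1 : ℝ)
         else ((B i ∩ B j).card : ℝ) / ((B i ∪ B j).card : ℝ)) := by
      intro i j
      by_cases h : A i ∪ A j = ∅
      · rw [if_pos h, if_pos ((hempty i j).mp h)]
      · rw [if_neg h, if_neg (fun hc => h ((hempty i j).mpr hc)), hinter, hunion]
    simp only [this]
    exact jaccard_psd_fintype n B c
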